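/- Let f : (0,1] → (0,∞) be non-decreasing with ∫₀¹ f(r)/r dr < ∞ (a Dini function), and fix ε ∈ (0,1). Define f_ε(r) := inf_{s∈(0,1]} { f(s) + f(1)(r/s)^ε } for r ∈ (0,1]. Then (i) f(r) ≤ f_ε(r) for all r ∈ (0,1], (ii) r ↦ f_ε(r)/r^ε is non-increasing on (0,1], and (iii) ∫₀¹ f_ε(r)/r dr < ∞. -/

import Mathlib

open MeasureTheory Set

theorem dini_regularization (f : ℝ → ℝ) (ε : ℝ) (hε : ε ∈ Ioo (0:ℝ) 1)
    (hpos : ∀ r ∈ Ioc (0:ℝ) 1, 0 < f r)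
    (hmono : MonotoneOn f (Ioc (0:ℝ) 1))
    (hint : IntegrableOn (fun r => f r / r) (Ioc (0:ℝ) 1))
    (fε : ℝ → ℝ)
    (hfε : ∀ r ∈ Ioc (0:ℝ) 1,
      fε r = sInf ((fun s => f s + f 1 * (r / s) ^ ε) '' Ioc (0:ℝ) 1)) :
    (∀ r ∈ Ioc (0:ℝ) 1, f r ≤ fε r) ∧
      AntitoneOn (fun r => fε r / r ^ ε) (Ioc (0:ℝ) 1) ∧
      IntegrableOn (fun r => fε r / r) (Ioc (0:ℝ) 1) := by
  obtain ⟨hε0, hε1⟩ := hε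
  have h1mem : (1:ℝ) ∈ Ioc (0:ℝ) 1 := by norm_num
  have hf1 : 0 < f 1 := hpos 1 h1mem
  have hne : ∀ r : ℝ, ((fun s => f s + f 1 * (r / s) ^ ε) '' Ioc (0:ℝ) 1).Nonempty :=
    fun r => ⟨_, mem_image_of_mem _ h1mem⟩
  -- lower bound
  have hlb : ∀ r ∈ Ioc (0:ℝ) 1, ∀ s ∈ Ioc (0:ℝ) 1,
      f r ≤ f s + f 1 * (r / s) ^ ε := by
    intro r hr s hs
    have hrp : 0 ≤ (r / s) ^ ε := Real.rpow_nonneg (div_nonneg hr.1.le hs.1.le) ε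
    rcases le_or_gt r s with h | h
    · have := hmono hr hs h
      nlinarith [mul_nonneg hf1.le hrp]
    · have h1 : (1:ℝ) ≤ r / s := (one_le_div hs.1).mpr h.le
      have h2 : (1:ℝ) ≤ (r / s) ^ ε := Real.one_le_rpow h1 hε0.le
      have h3 : f r ≤ f 1 := hmono hr h1mem hr.2
      have h4 : 0 < f s := hpos s hs
      nlinarith
  have hbdd : ∀ r ∈ Ioc (0:ℝ) 1,
      BddBelow ((fun s => f s + f 1 * (r / s) ^ ε) '' Ioc (0:ℝ) 1) := by
    intro r hr
    exact ⟨f r, fun x ⟨s, hs, hx⟩ => hx ▸ hlb r hr s hs⟩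
  have hle : ∀ r ∈ Ioc (0:ℝ) 1, f r ≤ fε r := by
    intro r hr
    rw [hfε r hr]
    exact le_csInf (hne r) (fun b ⟨s, hs, hb⟩ => hb ▸ hlb r hr s hs)
  -- upper bound at any point s
  have hub : ∀ r ∈ Ioc (0:ℝ) 1, ∀ s ∈ Ioc (0:ℝ) 1,
      fε r ≤ f s + f 1 * (r / s) ^ ε := by
    intro r hr s hs
    rw [hfε r hr]
    exact csInf_le (hbdd r hr) (mem_image_of_mem _ hs)
  refine ⟨hle, ?_, ?_⟩
  · -- antitone
    intro r hr r' hr' hrr'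
    simp only
    have hrε : (0:ℝ) < r ^ ε := Real.rpow_pos_of_pos hr.1 ε
    have hr'ε : (0:ℝ) < r' ^ ε := Real.rpow_pos_of_pos hr'.1 ε
    rw [div_le_div_iff₀ hr'ε hrε, ← div_le_iff₀ hr'ε, mul_div_assoc, hfε r hr]
    apply le_csInf (hne r)
    rintro b ⟨s, hs, rfl⟩
    have key : fε r' ≤ f s + f 1 * (r' / s) ^ ε := hub r' hr' s hs
    have hc1 : r ^ ε ≤ r' ^ ε := Real.rpow_le_rpow hr.1.le hrr' hε0.le
    have hc0 : 0 < r ^ ε / r' ^ ε := div_pos hrε hr'ε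
    have hcle : r ^ ε / r' ^ ε ≤ 1 := (div_le_one hr'ε).mpr hc1
    have heq : f 1 * (r' / s) ^ ε * (r ^ ε / r' ^ ε) = f 1 * (r / s) ^ ε := by
      have h2 : r' ^ ε ≠ 0 := hr'ε.ne'
      have h3 : s ^ ε ≠ 0 := (Real.rpow_pos_of_pos hs.1 ε).ne'
      rw [Real.div_rpow hr'.1.le hs.1.le, Real.div_rpow hr.1.le hs.1.le]
      field_simp
    have hfs : 0 < f s := hpos s hs
    calc fε r' * (r ^ ε / r' ^ ε) ≤ (f s + f 1 * (r' / s) ^ ε) * (r ^ ε / r' ^ ε) :=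
          mul_le_mul_of_nonneg_right key hc0.le
      _ = f s * (r ^ ε / r' ^ ε) + f 1 * (r' / s) ^ ε * (r ^ ε / r' ^ ε) := by ring
      _ ≤ f s + f 1 * (r / s) ^ ε := by
          rw [heq]
          nlinarith
  · -- integrability
    have hmonoε : MonotoneOn fε (Ioc (0:ℝ) 1) := by
      intro r hr r' hr' hrr'
      rw [hfε r' hr']
      apply le_csInf (hne r')
      rintro b ⟨s, hs, rfl⟩
      refine (hub r hr s hs).trans ?_
      have : (r / s) ^ ε ≤ (r' / s) ^ ε :=
        Real.rpow_le_rpow (div_nonneg hr.1.le hs.1.le)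
          (by gcongr <;> exact hs.1.le) hε0.le
      nlinarith
    have hmeas : AEStronglyMeasurable (fun r => fε r / r) (volume.restrict (Ioc (0:ℝ) 1)) := by
      exact ((aemeasurable_restrict_of_monotoneOn measurableSet_Ioc hmonoε).div
        aemeasurable_id).aestronglyMeasurable
    -- bound function
    set G : ℝ → ℝ := fun r => f (Real.sqrt r) / r + f 1 * (Real.sqrt r ^ ε / r) with hG
    -- part 1 : integrability of f(√r)/r
    have himg : (fun u : ℝ => u ^ 2) '' Ioc (0:ℝ) 1 = Ioc (0:ℝ) 1 := by
      ext x
      constructor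
      · rintro ⟨u, hu, rfl⟩
        have h2 : u ^ 2 ≤ 1 := by nlinarith [hu.1, hu.2]
        exact ⟨pow_pos hu.1 2, h2⟩
      · intro hx
        exact ⟨Real.sqrt x, ⟨Real.sqrt_pos.mpr hx.1, Real.sqrt_le_one.mpr hx.2⟩,
          Real.sq_sqrt hx.1.le⟩
    have hderiv : ∀ x ∈ Ioc (0:ℝ) 1,
        HasDerivWithinAt (fun u : ℝ => u ^ 2) (2 * x) (Ioc (0:ℝ) 1) x := by
      intro x hx
      simpa using (hasDerivAt_pow 2 x).hasDerivWithinAt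
    have hinj : InjOn (fun u : ℝ => u ^ 2) (Ioc (0:ℝ) 1) := by
      intro a ha b hb h
      have := congrArg Real.sqrt h
      rwa [Real.sqrt_sq ha.1.le, Real.sqrt_sq hb.1.le] at this
    have hiff := integrableOn_image_iff_integrableOn_abs_deriv_smul measurableSet_Ioc
      hderiv hinj (fun r => f (Real.sqrt r) / r)
    rw [himg] at hiff
    have hrhs : IntegrableOn
        (fun x => |2 * x| • (f (Real.sqrt (x ^ 2)) / x ^ 2)) (Ioc (0:ℝ) 1) := by
      refine IntegrableOn.congr_fun (f := fun x => 2 * (f x / x))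
        (hint.const_mul 2) ?_ measurableSet_Ioc
      intro u hu
      have hu0 : 0 < u := hu.1
      show 2 * (f u / u) = |2 * u| • (f (Real.sqrt (u ^ 2)) / u ^ 2)
      rw [Real.sqrt_sq hu0.le, abs_of_pos (by linarith : (0:ℝ) < 2 * u)]
      field_simp
      rw [smul_eq_mul, mul_div_assoc', mul_div_assoc', eq_div_iff (pow_ne_zero 2 hu0.ne')]
      ring
    have hpart1 : IntegrableOn (fun r => f (Real.sqrt r) / r) (Ioc (0:ℝ) 1) := hiff.mpr hrhs
    -- part 2 : integrability of √r^ε / r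
    have hpart2 : IntegrableOn (fun r => Real.sqrt r ^ ε / r) (Ioc (0:ℝ) 1) := by
      have hbase : IntegrableOn (fun t : ℝ => t ^ (ε / 2 - 1)) (Ioc (0:ℝ) 1) := by
        rw [integrableOn_Ioc_iff_integrableOn_Ioo]
        exact (intervalIntegral.integrableOn_Ioo_rpow_iff zero_lt_one).mpr (by linarith)
      apply hbase.congr_fun ?_ measurableSet_Ioc
      intro r hr
      have hr0 : 0 < r := hr.1
      show r ^ (ε / 2 - 1) = Real.sqrt r ^ ε / r
      rw [Real.sqrt_eq_rpow, ← Real.rpow_mul hr0.le,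
        show ε / 2 - 1 = 1 / 2 * ε - 1 by ring, Real.rpow_sub hr0, Real.rpow_one]
    have hGint : IntegrableOn G (Ioc (0:ℝ) 1) := hpart1.add (hpart2.const_mul (f 1))
    apply Integrable.mono' hGint hmeas
    rw [ae_restrict_iff' measurableSet_Ioc]
    filter_upwards with r
    intro hr
    have hr0 : 0 < r := hr.1
    have hsq : Real.sqrt r ∈ Ioc (0:ℝ) 1 :=
      ⟨Real.sqrt_pos.mpr hr0, Real.sqrt_le_one.mpr hr.2⟩
    have hbound : fε r ≤ f (Real.sqrt r) + f 1 * Real.sqrt r ^ ε := by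
      have := hub r hr (Real.sqrt r) hsq
      rwa [Real.div_sqrt] at this
    have hfε0 : 0 < fε r := lt_of_lt_of_le (hpos r hr) (hle r hr)
    rw [Real.norm_eq_abs, abs_of_pos (div_pos hfε0 hr0)]
    have : fε r / r ≤ (f (Real.sqrt r) + f 1 * Real.sqrt r ^ ε) / r := by gcongr
    calc fε r / r ≤ (f (Real.sqrt r) + f 1 * Real.sqrt r ^ ε) / r := this
      _ = G r := by simp only [hG]; ring
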